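/- Let G be a finite group with subgroups H ≤ U ≤ G and suppose A ≤ G is Dedekind with AH = G. Then there is a group homomorphism from N_G(H)/H to N_{G}(U)/U induced by inclusion, whose kernel is (N_G(H) ∩ U)/H = N_U(H)/H. -/

import Mathlib

open scoped Pointwise

/-- If `A` is a Dedekind subgroup with `AH = G` and `H ≤ U`, then there is a
homomorphism `N_G(H)/H → N_G(U)/U` induced by inclusion, whose kernel is
`(N_G(H) ⊓ U)/H = N_U(H)/H`. -/
theorem stmt_19 {G : Type*} [Group G] [Finite G] (H A U : Subgroup G)
    (hAH : (A : Set G) * (H : Set G) = Set.univ)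
    (hDed : ∀ J : Subgroup G, J ≤ A → (J.subgroupOf A).Normal)
    (hHU : H ≤ U) :
    ∃ f : (Subgroup.normalizer (H : Set G) ⧸ H.subgroupOf (Subgroup.normalizer (H : Set G))) →*
        (Subgroup.normalizer (U : Set G) ⧸ U.subgroupOf (Subgroup.normalizer (U : Set G))),
      (∀ (g : Subgroup.normalizer (H : Set G)) (hg : (g : G) ∈ Subgroup.normalizer (U : Set G)),
        f (QuotientGroup.mk g) = QuotientGroup.mk ⟨(g : G), hg⟩) ∧
      f.ker = Subgroup.map (QuotientGroup.mk' (H.subgroupOf (Subgroup.normalizer (H : Set G))))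
        ((Subgroup.normalizer (H : Set G) ⊓ U).subgroupOf (Subgroup.normalizer (H : Set G))) := by
  -- Step 1: elements of A normalizing H conjugate U into U
  have hconj : ∀ g, g ∈ A → g ∈ (Subgroup.normalizer (H : Set G)) → ∀ u ∈ U, g * u * g⁻¹ ∈ U := by
    intro g hgA hgN u hu
    have hu' : u ∈ (A : Set G) * (H : Set G) := by rw [hAH]; trivial
    obtain ⟨a, haA, h, hh, rfl⟩ := hu'
    have haU : a ∈ U := by
      have hhU : h ∈ U := hHU hh
      have := U.mul_mem hu (U.inv_mem hhU)
      simpa using this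
    have hn := hDed (A ⊓ U) inf_le_left
    have hx : (⟨a, haA⟩ : A) ∈ (A ⊓ U).subgroupOf A := by
      simp [Subgroup.mem_subgroupOf, haA, haU]
    have hc := hn.conj_mem _ hx ⟨g, hgA⟩
    have h1 : g * a * g⁻¹ ∈ U := by
      have : (((⟨g, hgA⟩ : A) * ⟨a, haA⟩ * (⟨g, hgA⟩ : A)⁻¹ : A) : G) ∈ A ⊓ U := hc
      simpa using this.2
    have h2 : g * h * g⁻¹ ∈ H := (Subgroup.mem_normalizer_iff.mp hgN h).mp hh
    have : (g * a * g⁻¹) * (g * h * g⁻¹) ∈ U := U.mul_mem h1 (hHU h2)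
    have e : (g * a * g⁻¹) * (g * h * g⁻¹) = g * (a * h) * g⁻¹ := by group
    rwa [e] at this
  -- Step 2: N_G(H) ≤ N_G(U)
  have key : (Subgroup.normalizer (H : Set G)) ≤ (Subgroup.normalizer (U : Set G)) := by
    intro g hg
    have hg' : g ∈ (A : Set G) * (H : Set G) := by rw [hAH]; trivial
    obtain ⟨a, haA, h, hh, rfl⟩ := hg'
    have hhN : h ∈ (Subgroup.normalizer (H : Set G)) := Subgroup.le_normalizer hh
    have haN : a ∈ (Subgroup.normalizer (H : Set G)) := by
      have := (Subgroup.normalizer (H : Set G)).mul_mem hg ((Subgroup.normalizer (H : Set G)).inv_mem hhN)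
      simpa using this
    have haNU : a ∈ (Subgroup.normalizer (U : Set G)) := by
      rw [Subgroup.mem_normalizer_iff]
      intro n
      constructor
      · exact fun hn => hconj a haA haN n hn
      · intro hn
        have := hconj a⁻¹ (A.inv_mem haA) ((Subgroup.normalizer (H : Set G)).inv_mem haN) _ hn
        simpa [mul_assoc] using this
    have hhNU : h ∈ (Subgroup.normalizer (U : Set G)) := Subgroup.le_normalizer (hHU hh)
    exact (Subgroup.normalizer (U : Set G)).mul_mem haNU hhNU
  -- Step 3: construct the map
  have hle : H.subgroupOf (Subgroup.normalizer (H : Set G)) ≤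
      (U.subgroupOf (Subgroup.normalizer (U : Set G))).comap (Subgroup.inclusion key) := by
    intro x hx
    simp only [Subgroup.mem_comap, Subgroup.mem_subgroupOf] at hx ⊢
    exact hHU hx
  refine ⟨QuotientGroup.map _ _ (Subgroup.inclusion key) hle, ?_, ?_⟩
  · intro g hg
    rw [QuotientGroup.map_mk]
    rfl
  · ext x
    induction x using QuotientGroup.induction_on with
    | H g =>
      simp only [MonoidHom.mem_ker, QuotientGroup.map_mk, QuotientGroup.eq_one_iff,
        Subgroup.mem_subgroupOf, Subgroup.mem_map]
      have hco : ((Subgroup.inclusion key) g : G) = (g : G) := rfl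
      rw [hco]
      constructor
      · intro hgU
        exact ⟨g, by simp [g.2, hgU], rfl⟩
      · rintro ⟨s, hs, hsg⟩
        rw [Subgroup.mem_inf] at hs
        have hmem : s⁻¹ * g ∈ H.subgroupOf (Subgroup.normalizer (H : Set G)) := by
          rw [QuotientGroup.mk'_apply, QuotientGroup.eq] at hsg
          exact hsg
        rw [Subgroup.mem_subgroupOf] at hmem
        have hg : (g : G) = (s : G) * ((s⁻¹ * g : (Subgroup.normalizer (H : Set G))) : G) := by
          push_cast; group
        rw [hg]; exact U.mul_mem hs.2 (hHU hmem)
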